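/- Let n ≥ 1 and k ≥ 0 be integers, let μ be a locally finite Borel (Radon) measure on ℝ^{n+k} with finite entropy λ(μ) < ∞, and let p ∈ ℝ^{n+k} be a point at which the n-dimensional density Θ = lim_{r→0⁺} μ(B̄_r(p)) / (ω_n rⁿ) exists, where B̄_r(p) is the closed ball of radius r centered at p and ω_n is the Lebesgue measure of the unit ball in ℝⁿ. Then lim_{t₀→0⁺} F_{p,t₀}(μ) = Θ; in particular λ(μ) ≥ Θ. -/

import Mathlib

open MeasureTheory Metric Set ENNReal Filter

/-- The Colding–Minicozzi F-functional of a locally finite Borel (Radon) measure `μ` on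
`ℝ^{n+k}`: `F_{x₀,t₀}(μ) = (4πt₀)^{-n/2} ∫ e^{-‖x-x₀‖²/(4t₀)} dμ(x)`. -/
noncomputable def Fmeas (n k : ℕ) (μ : Measure (EuclideanSpace ℝ (Fin (n + k))))
    (x₀ : EuclideanSpace ℝ (Fin (n + k))) (t₀ : ℝ) : ℝ≥0∞ :=
  ENNReal.ofReal ((4 * Real.pi * t₀) ^ (-(n : ℝ) / 2)) *
    ∫⁻ x, ENNReal.ofReal (Real.exp (-‖x - x₀‖ ^ 2 / (4 * t₀))) ∂μ

/-- The Colding–Minicozzi entropy of a measure: `λ(μ) = sup_{x₀, t₀ > 0} F_{x₀,t₀}(μ)`. -/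
noncomputable def entropyMeas (n k : ℕ) (μ : Measure (EuclideanSpace ℝ (Fin (n + k)))) : ℝ≥0∞ :=
  ⨆ (x₀ : EuclideanSpace ℝ (Fin (n + k))) (t₀ : ℝ) (_ : 0 < t₀), Fmeas n k μ x₀ t₀

lemma sqrt_pow_eq_rpow {x : ℝ} (hx : 0 ≤ x) (n : ℕ) :
    Real.sqrt x ^ n = x ^ ((n : ℝ) / 2) := by
  rw [Real.sqrt_eq_rpow, ← Real.rpow_natCast (x ^ (1/2 : ℝ)), ← Real.rpow_mul hx]
  ring_nf

lemma gauss_set_eq {m : ℕ} (p : EuclideanSpace ℝ (Fin m)) {b : ℝ} (hb : 0 < b)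
    {s : ℝ} (hs0 : 0 < s) (hs1 : s ≤ 1) :
    {a : EuclideanSpace ℝ (Fin m) | s ≤ Real.exp (-(b * ‖a - p‖ ^ 2))} =
      closedBall p (Real.sqrt (-Real.log s / b)) := by
  have hy : 0 ≤ -Real.log s / b := by
    have h := Real.log_nonpos hs0.le hs1
    have : 0 ≤ -Real.log s := by linarith
    positivity
  ext a
  simp only [mem_setOf_eq, mem_closedBall, dist_eq_norm]
  constructor
  · intro h
    have h1 : Real.log s ≤ -(b * ‖a - p‖ ^ 2) := (Real.log_le_iff_le_exp hs0).2 h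
    have h2 : ‖a - p‖ ^ 2 ≤ -Real.log s / b := by
      rw [le_div_iff₀ hb]; nlinarith
    calc ‖a - p‖ = Real.sqrt (‖a - p‖ ^ 2) := (Real.sqrt_sq (norm_nonneg _)).symm
      _ ≤ Real.sqrt (-Real.log s / b) := Real.sqrt_le_sqrt h2
  · intro h
    have h2 : ‖a - p‖ ^ 2 ≤ -Real.log s / b := by
      calc ‖a - p‖ ^ 2 ≤ Real.sqrt (-Real.log s / b) ^ 2 := by
            exact pow_le_pow_left₀ (norm_nonneg _) h 2
        _ = -Real.log s / b := Real.sq_sqrt hy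
    have h1 : Real.log s ≤ -(b * ‖a - p‖ ^ 2) := by
      rw [le_div_iff₀ hb] at h2; nlinarith
    exact (Real.log_le_iff_le_exp hs0).1 h1

lemma gauss_layercake {m : ℕ} (μ' : Measure (EuclideanSpace ℝ (Fin m)))
    (p : EuclideanSpace ℝ (Fin m)) {b : ℝ} (hb : 0 < b) :
    ∫⁻ x, ENNReal.ofReal (Real.exp (-(b * ‖x - p‖ ^ 2))) ∂μ' =
      ∫⁻ s in Ioc (0 : ℝ) 1, μ' (closedBall p (Real.sqrt (-Real.log s / b))) := by
  have hmeas : Measurable fun x : EuclideanSpace ℝ (Fin m) => Real.exp (-(b * ‖x - p‖ ^ 2)) := by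
    fun_prop
  rw [lintegral_eq_lintegral_meas_le μ'
    (Eventually.of_forall fun x => (Real.exp_pos _).le) hmeas.aemeasurable]
  rw [← Ioc_union_Ioi_eq_Ioi (zero_le_one' ℝ),
    lintegral_union measurableSet_Ioi (Set.Ioc_disjoint_Ioi le_rfl)]
  have h2 : ∫⁻ s in Ioi (1:ℝ), μ' {a | s ≤ Real.exp (-(b * ‖a - p‖ ^ 2))} = 0 := by
    rw [setLIntegral_congr_fun measurableSet_Ioi
      (fun s (hs : s ∈ Ioi (1:ℝ)) => ?_), lintegral_zero]
    have : {a : EuclideanSpace ℝ (Fin m) | s ≤ Real.exp (-(b * ‖a - p‖ ^ 2))} = ∅ := by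
      ext a
      simp only [mem_setOf_eq, mem_empty_iff_false, iff_false, not_le]
      calc Real.exp (-(b * ‖a - p‖ ^ 2)) ≤ 1 := by
            rw [← Real.exp_zero]
            exact Real.exp_le_exp.2 (by nlinarith [sq_nonneg ‖a - p‖])
        _ < s := hs
    rw [this, measure_empty]
  rw [h2, add_zero]
  exact setLIntegral_congr_fun measurableSet_Ioc
    (fun s hs => by rw [gauss_set_eq p hb hs.1 hs.2])

lemma integrable_rexp_gauss {m : ℕ} {b : ℝ} (hb : 0 < b) :
    Integrable (fun v : EuclideanSpace ℝ (Fin m) => Real.exp (-(b * ‖v‖ ^ 2))) := by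
  have h := (GaussianFourier.integrable_cexp_neg_mul_sq_norm_add (V := EuclideanSpace ℝ (Fin m))
    (b := (b : ℂ)) (by simpa using hb) 0 0).norm
  refine h.congr (Eventually.of_forall fun v => ?_)
  simp only [Complex.norm_exp]
  congr 1
  push_cast
  simp [← Complex.ofReal_pow]

lemma gauss_total {m : ℕ} :
    ∫⁻ x : EuclideanSpace ℝ (Fin m), ENNReal.ofReal (Real.exp (-(1 * ‖x - 0‖ ^ 2))) =
      ENNReal.ofReal (Real.pi ^ ((m : ℝ) / 2)) := by
  simp only [sub_zero]
  rw [← ofReal_integral_eq_lintegral_ofReal (integrable_rexp_gauss one_pos)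
    (Eventually.of_forall fun x => (Real.exp_pos _).le)]
  congr 1
  have := GaussianFourier.integral_rexp_neg_mul_sq_norm (V := EuclideanSpace ℝ (Fin m)) (b := 1) one_pos
  simp only [neg_mul] at this ⊢
  rw [this, finrank_euclideanSpace_fin, div_one]

lemma key_I (m : ℕ) :
    (volume (ball (0 : EuclideanSpace ℝ (Fin m)) 1)) *
      ∫⁻ s in Ioc (0 : ℝ) 1, ENNReal.ofReal ((-Real.log s) ^ ((m : ℝ) / 2)) =
      ENNReal.ofReal (Real.pi ^ ((m : ℝ) / 2)) := by
  have key : ∀ s ∈ Ioc (0 : ℝ) 1,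
      volume (closedBall (0 : EuclideanSpace ℝ (Fin m)) (Real.sqrt (-Real.log s / 1))) =
        ENNReal.ofReal ((-Real.log s) ^ ((m : ℝ) / 2)) *
          volume (ball (0 : EuclideanSpace ℝ (Fin m)) 1) := by
    intro s hs
    have hlog : 0 ≤ -Real.log s := by
      have := Real.log_nonpos hs.1.le hs.2; linarith
    rw [Measure.addHaar_closedBall _ _ (Real.sqrt_nonneg _), finrank_euclideanSpace_fin,
      div_one, sqrt_pow_eq_rpow hlog]
  have h := gauss_layercake (volume : Measure (EuclideanSpace ℝ (Fin m))) 0 one_pos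
  rw [gauss_total] at h
  rw [h, setLIntegral_congr_fun measurableSet_Ioc key,
    lintegral_mul_const' _ _ (measure_ball_lt_top (μ := (volume : Measure (EuclideanSpace ℝ (Fin m)))) (x := 0) (r := 1)).ne, mul_comm]

lemma growth_bound (n k : ℕ) (μ : Measure (EuclideanSpace ℝ (Fin (n + k))))
    (p : EuclideanSpace ℝ (Fin (n + k))) {r : ℝ} (hr : 0 < r) :
    μ (closedBall p r) ≤ entropyMeas n k μ *
      ENNReal.ofReal (Real.exp 4⁻¹ * (4 * Real.pi * r ^ 2) ^ ((n : ℝ) / 2)) := by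
  have hF : Fmeas n k μ p (r ^ 2) ≤ entropyMeas n k μ :=
    le_iSup_of_le p (le_iSup_of_le (r ^ 2) (le_iSup_of_le (by positivity) le_rfl))
  set c : ℝ := (4 * Real.pi * r ^ 2) ^ (-(n : ℝ) / 2) * Real.exp (-4⁻¹) with hc_def
  have hc : 0 < c := by
    apply mul_pos (Real.rpow_pos_of_pos (by positivity) _) (Real.exp_pos _)
  have hlow : ENNReal.ofReal c * μ (closedBall p r) ≤ Fmeas n k μ p (r ^ 2) := by
    rw [ENNReal.ofReal_mul (Real.rpow_pos_of_pos (by positivity) _).le, mul_assoc]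
    refine mul_le_mul_right ?_ _
    calc ENNReal.ofReal (Real.exp (-4⁻¹)) * μ (closedBall p r)
        = ∫⁻ _ in closedBall p r, ENNReal.ofReal (Real.exp (-4⁻¹)) ∂μ := by
          rw [setLIntegral_const]
      _ ≤ ∫⁻ x in closedBall p r,
            ENNReal.ofReal (Real.exp (-‖x - p‖ ^ 2 / (4 * r ^ 2))) ∂μ := by
          refine setLIntegral_mono (by fun_prop) fun x hx => ?_
          refine ENNReal.ofReal_le_ofReal (Real.exp_le_exp.2 ?_)
          rw [mem_closedBall, dist_eq_norm] at hx
          rw [neg_div, neg_le_neg_iff, div_le_iff₀ (by positivity)]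
          nlinarith [norm_nonneg (x - p)]
      _ ≤ ∫⁻ x, ENNReal.ofReal (Real.exp (-‖x - p‖ ^ 2 / (4 * r ^ 2))) ∂μ :=
          setLIntegral_le_lintegral _ _
  have key : ENNReal.ofReal c * μ (closedBall p r) ≤ entropyMeas n k μ := hlow.trans hF
  have h0 : ENNReal.ofReal c ≠ 0 := by simp [ENNReal.ofReal_eq_zero, not_le, hc]
  calc μ (closedBall p r)
      = (ENNReal.ofReal c)⁻¹ * (ENNReal.ofReal c * μ (closedBall p r)) := by
        rw [← mul_assoc, ENNReal.inv_mul_cancel h0 ENNReal.ofReal_ne_top, one_mul]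
    _ ≤ (ENNReal.ofReal c)⁻¹ * entropyMeas n k μ := mul_le_mul_right key _
    _ = entropyMeas n k μ * ENNReal.ofReal c⁻¹ := by
        rw [ENNReal.ofReal_inv_of_pos hc, mul_comm]
    _ = entropyMeas n k μ *
          ENNReal.ofReal (Real.exp 4⁻¹ * (4 * Real.pi * r ^ 2) ^ ((n : ℝ) / 2)) := by
        congr 1
        rw [hc_def, mul_inv, Real.exp_neg, inv_inv, neg_div, Real.rpow_neg (by positivity),
          inv_inv, mul_comm]

lemma real_id1 {u t : ℝ} (hu : 0 < u) (ht : 0 < t) (e : ℝ) :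
    (4 * Real.pi * t) ^ (-e) * (Real.exp 4⁻¹ * (4 * Real.pi * (u * (4 * t))) ^ e) =
      Real.exp 4⁻¹ * 4 ^ e * u ^ e := by
  have hA : (0:ℝ) < 4 * Real.pi * t := by positivity
  rw [show 4 * Real.pi * (u * (4 * t)) = (4 * Real.pi * t) * (4 * u) by ring,
    Real.mul_rpow hA.le (by positivity : (0:ℝ) ≤ 4 * u),
    Real.mul_rpow (by norm_num : (0:ℝ) ≤ (4:ℝ)) hu.le,
    Real.rpow_neg hA.le]
  have h : (4 * Real.pi * t) ^ e ≠ 0 := (Real.rpow_pos_of_pos hA e).ne'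
  field_simp

lemma real_id2 {u t : ℝ} (hu : 0 < u) (ht : 0 < t) (e : ℝ) :
    (u * (4 * t)) ^ e * (4 * Real.pi * t) ^ (-e) = Real.pi ^ (-e) * u ^ e := by
  have hB : (0:ℝ) < 4 * t := by positivity
  rw [show 4 * Real.pi * t = (4 * t) * Real.pi by ring,
    Real.mul_rpow hB.le Real.pi_pos.le,
    Real.mul_rpow hu.le (by positivity : (0:ℝ) ≤ 4 * t),
    Real.rpow_neg hB.le, Real.rpow_neg Real.pi_pos.le]
  have h : (4 * t) ^ e ≠ 0 := (Real.rpow_pos_of_pos hB e).ne'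
  have h2 : Real.pi ^ e ≠ 0 := (Real.rpow_pos_of_pos Real.pi_pos e).ne'
  field_simp

/-- If `μ` is a locally finite Borel measure on `ℝ^{n+k}` with finite entropy and the
`n`-dimensional density `Θ = lim_{r→0⁺} μ(B̄_r(p))/(ω_n rⁿ)` exists at a point `p`
(where `ω_n` is the Lebesgue measure of the unit ball in `ℝⁿ`), then
`F_{p,t₀}(μ) → Θ` as `t₀ → 0⁺`; in particular `λ(μ) ≥ Θ`. -/
theorem F_functional_tendsto_density (n k : ℕ) (hn : 1 ≤ n)
    (μ : Measure (EuclideanSpace ℝ (Fin (n + k)))) [IsLocallyFiniteMeasure μ]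
    (hfin : entropyMeas n k μ < ⊤)
    (p : EuclideanSpace ℝ (Fin (n + k))) (Θ : ℝ≥0∞)
    (hΘ : Tendsto
      (fun r : ℝ => μ (Metric.closedBall p r) /
        (MeasureTheory.volume (Metric.ball (0 : EuclideanSpace ℝ (Fin n)) 1) *
          ENNReal.ofReal (r ^ n)))
      (nhdsWithin 0 (Set.Ioi 0)) (nhds Θ)) :
    Tendsto (fun t₀ : ℝ => Fmeas n k μ p t₀) (nhdsWithin 0 (Set.Ioi 0)) (nhds Θ) ∧
      Θ ≤ entropyMeas n k μ := by
  classical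
  set ω : ℝ≥0∞ := volume (ball (0 : EuclideanSpace ℝ (Fin n)) 1) with hω_def
  have hω0 : ω ≠ 0 := (measure_ball_pos _ _ one_pos).ne'
  have hωt : ω ≠ ⊤ := measure_ball_lt_top.ne
  set Λ := entropyMeas n k μ with hΛ
  set ν : ℝ → ℝ≥0∞ := fun r => μ (closedBall p r) with hν
  have hνmono : Monotone ν := fun a b hab =>
    measure_mono (closedBall_subset_closedBall hab)
  set e : ℝ := (n : ℝ) / 2 with he
  have hnege : -(n : ℝ) / 2 = -e := by rw [he]; ring
  set I := ∫⁻ s in Ioc (0 : ℝ) 1, ENNReal.ofReal ((-Real.log s) ^ e) with hI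
  have hωI : ω * I = ENNReal.ofReal (Real.pi ^ e) := key_I n
  have hItop : I ≠ ⊤ := by
    intro h
    rw [h, ENNReal.mul_top hω0] at hωI
    exact ENNReal.ofReal_ne_top hωI.symm
  -- integrand
  set F : ℝ → ℝ → ℝ≥0∞ := fun t s =>
    ENNReal.ofReal ((4 * Real.pi * t) ^ (-(n : ℝ) / 2)) *
      ν (Real.sqrt (-Real.log s * (4 * t))) with hF
  have hFmeas_eq : ∀ t : ℝ, 0 < t → Fmeas n k μ p t = ∫⁻ s in Ioc (0 : ℝ) 1, F t s := by
    intro t ht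
    have hb : (0 : ℝ) < (4 * t)⁻¹ := by positivity
    have h1 : ∫⁻ x, ENNReal.ofReal (Real.exp (-‖x - p‖ ^ 2 / (4 * t))) ∂μ
        = ∫⁻ s in Ioc (0 : ℝ) 1, ν (Real.sqrt (-Real.log s * (4 * t))) := by
      rw [show (fun x : EuclideanSpace ℝ (Fin (n + k)) =>
          ENNReal.ofReal (Real.exp (-‖x - p‖ ^ 2 / (4 * t)))) =
          fun x => ENNReal.ofReal (Real.exp (-((4 * t)⁻¹ * ‖x - p‖ ^ 2))) by
        funext x; rw [neg_div, div_eq_inv_mul]]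
      rw [gauss_layercake μ p hb]
      refine setLIntegral_congr_fun measurableSet_Ioc (fun s _ => ?_)
      rw [show -Real.log s / (4 * t)⁻¹ = -Real.log s * (4 * t) by
        rw [div_inv_eq_mul]]
    rw [Fmeas, h1, ← lintegral_const_mul' _ _ ENNReal.ofReal_ne_top]
  -- measurability
  have hmeas_pow : Measurable fun s : ℝ => ENNReal.ofReal ((-Real.log s) ^ e) := by
    measurability
  have hF_meas : ∀ t : ℝ, Measurable (F t) := by
    intro t
    exact measurable_const.mul (hνmono.measurable.comp
      (Real.continuous_sqrt.measurable.comp ((Real.measurable_log.neg).mul_const (4 * t))))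
  -- a.e. membership in Ioo
  have hae1 : ∀ᵐ s ∂(volume.restrict (Ioc (0 : ℝ) 1)), s ∈ Ioo (0 : ℝ) 1 := by
    have h1 : ∀ᵐ s : ℝ ∂volume, s ≠ 1 := by
      refine ae_iff.2 ?_
      simpa using Real.volume_singleton (a := 1)
    rw [ae_restrict_iff' measurableSet_Ioc]
    filter_upwards [h1] with s hs hmem
    exact ⟨hmem.1, lt_of_le_of_ne hmem.2 hs⟩
  -- bound
  set bound : ℝ → ℝ≥0∞ := fun s =>
    Λ * ENNReal.ofReal (Real.exp 4⁻¹ * 4 ^ e * (-Real.log s) ^ e) with hbound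
  have hbound_int : ∫⁻ s in Ioc (0 : ℝ) 1, bound s ≠ ⊤ := by
    have heq : ∀ s ∈ Ioc (0 : ℝ) 1, bound s =
        (Λ * ENNReal.ofReal (Real.exp 4⁻¹ * 4 ^ e)) * ENNReal.ofReal ((-Real.log s) ^ e) := by
      intro s _
      simp only [hbound]
      rw [ENNReal.ofReal_mul (show (0:ℝ) ≤ Real.exp 4⁻¹ * 4 ^ e by positivity), ← mul_assoc]
    rw [setLIntegral_congr_fun measurableSet_Ioc heq,
      lintegral_const_mul' _ _ (ENNReal.mul_ne_top hfin.ne ENNReal.ofReal_ne_top)]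
    exact ENNReal.mul_ne_top (ENNReal.mul_ne_top hfin.ne ENNReal.ofReal_ne_top) hItop
  have h_bound : ∀ᶠ t in nhdsWithin (0:ℝ) (Ioi 0),
      ∀ᵐ s ∂(volume.restrict (Ioc (0 : ℝ) 1)), F t s ≤ bound s := by
    filter_upwards [self_mem_nhdsWithin] with t ht
    filter_upwards [hae1] with s hs
    have ht' : (0 : ℝ) < t := ht
    have hu : 0 < -Real.log s := by
      have := Real.log_neg hs.1 hs.2; linarith
    have hrpos : 0 < Real.sqrt (-Real.log s * (4 * t)) := Real.sqrt_pos.2 (by positivity)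
    have hsq : Real.sqrt (-Real.log s * (4 * t)) ^ 2 = -Real.log s * (4 * t) :=
      Real.sq_sqrt (by positivity)
    calc F t s ≤ ENNReal.ofReal ((4 * Real.pi * t) ^ (-(n : ℝ) / 2)) *
        (Λ * ENNReal.ofReal (Real.exp 4⁻¹ *
          (4 * Real.pi * Real.sqrt (-Real.log s * (4 * t)) ^ 2) ^ ((n : ℝ) / 2))) :=
          mul_le_mul_right (growth_bound n k μ p hrpos) _
      _ = bound s := by
          rw [hsq, mul_left_comm, hbound]
          congr 1
          rw [← ENNReal.ofReal_mul
            (show (0:ℝ) ≤ (4 * Real.pi * t) ^ (-(n:ℝ)/2) by positivity)]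
          congr 1
          rw [hnege, ← he, real_id1 hu ht' e]
  -- pointwise limit
  set flim : ℝ → ℝ≥0∞ := fun s =>
    Θ * (ω * ENNReal.ofReal (Real.pi ^ (-e) * (-Real.log s) ^ e)) with hflim
  have h_lim : ∀ᵐ s ∂(volume.restrict (Ioc (0 : ℝ) 1)),
      Tendsto (fun t => F t s) (nhdsWithin (0:ℝ) (Ioi 0)) (nhds (flim s)) := by
    filter_upwards [hae1] with s hs
    have hu : 0 < -Real.log s := by
      have := Real.log_neg hs.1 hs.2; linarith
    have hrt : Tendsto (fun t : ℝ => Real.sqrt (-Real.log s * (4 * t)))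
        (nhdsWithin (0:ℝ) (Ioi 0)) (nhdsWithin (0:ℝ) (Ioi 0)) := by
      rw [tendsto_nhdsWithin_iff]
      constructor
      · have hcont : Continuous fun t : ℝ => Real.sqrt (-Real.log s * (4 * t)) := by fun_prop
        have h1 : Tendsto (fun t : ℝ => Real.sqrt (-Real.log s * (4 * t)))
            (nhds 0) (nhds 0) := by
          have h2 := hcont.tendsto 0
          simpa using h2
        exact h1.mono_left nhdsWithin_le_nhds
      · filter_upwards [self_mem_nhdsWithin] with t (ht : (0:ℝ) < t)
        exact Real.sqrt_pos.2 (by positivity)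
    have hcomp := hΘ.comp hrt
    set K : ℝ≥0∞ := ω * ENNReal.ofReal (Real.pi ^ (-e) * (-Real.log s) ^ e) with hK
    have hKtop : K ≠ ⊤ := ENNReal.mul_ne_top hωt ENNReal.ofReal_ne_top
    have hmul := ENNReal.Tendsto.mul_const hcomp (Or.inr hKtop)
    refine Tendsto.congr' ?_ hmul
    filter_upwards [self_mem_nhdsWithin] with t (ht : (0:ℝ) < t)
    set r := Real.sqrt (-Real.log s * (4 * t)) with hr_def
    have hr : 0 < r := Real.sqrt_pos.2 (by positivity)
    have ha0 : ω * ENNReal.ofReal (r ^ n) ≠ 0 := by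
      refine mul_ne_zero hω0 ?_
      simp only [ne_eq, ENNReal.ofReal_eq_zero, not_le]
      positivity
    have hat : ω * ENNReal.ofReal (r ^ n) ≠ ⊤ := ENNReal.mul_ne_top hωt ENNReal.ofReal_ne_top
    have hKa : (ω * ENNReal.ofReal (r ^ n)) *
        ENNReal.ofReal ((4 * Real.pi * t) ^ (-(n : ℝ) / 2)) = K := by
      rw [hK, mul_assoc, ← ENNReal.ofReal_mul (show (0:ℝ) ≤ r ^ n by positivity)]
      congr 2
      rw [hr_def, sqrt_pow_eq_rpow (by positivity) n, ← he, hnege, real_id2 hu ht e]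
    show ν r / (ω * ENNReal.ofReal (r ^ n)) * K = F t s
    rw [← hKa, ← mul_assoc, ENNReal.div_mul_cancel ha0 hat, hF, mul_comm]
  -- dominated convergence
  have hDCT := tendsto_lintegral_filter_of_dominated_convergence
    (μ := volume.restrict (Ioc (0 : ℝ) 1)) (l := nhdsWithin (0:ℝ) (Ioi 0))
    bound (Eventually.of_forall hF_meas) h_bound hbound_int h_lim
  -- value of limit integral
  have hflim_int : ∫⁻ s in Ioc (0 : ℝ) 1, flim s = Θ := by
    have heq : ∀ s, flim s =
        (Θ * ω * ENNReal.ofReal (Real.pi ^ (-e))) * ENNReal.ofReal ((-Real.log s) ^ e) := by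
      intro s
      simp only [hflim]
      rw [ENNReal.ofReal_mul (show (0:ℝ) ≤ Real.pi ^ (-e) by positivity)]
      ring
    simp only [heq]
    rw [lintegral_const_mul _ hmeas_pow, ← hI]
    have : Θ * ω * ENNReal.ofReal (Real.pi ^ (-e)) * I
        = Θ * (ENNReal.ofReal (Real.pi ^ (-e)) * (ω * I)) := by ring
    rw [this, hωI, ← ENNReal.ofReal_mul (show (0:ℝ) ≤ Real.pi ^ (-e) by positivity),
      Real.rpow_neg Real.pi_pos.le, inv_mul_cancel₀ (Real.rpow_pos_of_pos Real.pi_pos e).ne',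
      ENNReal.ofReal_one, mul_one]
  have hmain : Tendsto (fun t₀ : ℝ => Fmeas n k μ p t₀)
      (nhdsWithin (0:ℝ) (Ioi 0)) (nhds Θ) := by
    rw [← hflim_int]
    refine Tendsto.congr' ?_ hDCT
    filter_upwards [self_mem_nhdsWithin] with t (ht : (0:ℝ) < t)
    exact (hFmeas_eq t ht).symm
  refine ⟨hmain, le_of_tendsto hmain ?_⟩
  filter_upwards [self_mem_nhdsWithin] with t (ht : (0:ℝ) < t)
  exact le_iSup_of_le p (le_iSup_of_le t (le_iSup_of_le ht le_rfl))
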